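/- arXiv:2308.08317 — 2 statements merged into one kernel-verified Lean document; each statement's English description precedes it below -/
import Mathlib

section
/- Suppose Hypothesis (H) holds and set c* := (a_2 − 2a_1 + a_1a_2)/(a_1a_2). If ν({x ∈ 𝕏 : R_x ≠ ν}) > 0, then c* ≤ 0 and a_n = n/((n−1)(1−c*) + a_1^{-1}) for every n ≥ 1. -/
open MeasureTheory ProbabilityTheory ENNReal

/-- A sequence `X` is exchangeable under `P`: every finite prefix has a
permutation-invariant joint distribution. -/
def Exchangeable {Ω 𝕏 : Type*} [MeasurableSpace Ω] [MeasurableSpace 𝕏]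
    (P : Measure Ω) (X : ℕ → Ω → 𝕏) : Prop :=
  ∀ (n : ℕ) (σ : Equiv.Perm (Fin n)),
    P.map (fun ω (i : Fin n) => X (σ i) ω) = P.map (fun ω (i : Fin n) => X i ω)

/-- The predictive distributions of `X` are
`ℙ(X_{n+1} ∈ ·  | X_1,…,X_n) = (1 - a_n) ν + (a_n/n) ∑_{i=1}^n R_{X_i}` a.s.,
expressed in disintegrated form: for every measurable `B ⊆ 𝕏` and every
measurable set `A` of trajectories of the first `n` coordinates. -/
def PredEq {Ω 𝕏 : Type*} [MeasurableSpace Ω] [MeasurableSpace 𝕏]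
    (P : Measure Ω) (X : ℕ → Ω → 𝕏) (ν : Measure 𝕏) (R : Kernel 𝕏 𝕏) (a : ℕ → ℝ) : Prop :=
  ∀ n : ℕ, 1 ≤ n → ∀ B : Set 𝕏, MeasurableSet B → ∀ A : Set (Fin n → 𝕏), MeasurableSet A →
    P {ω | (fun i : Fin n => X i ω) ∈ A ∧ X n ω ∈ B} =
      ∫⁻ x in A, (ENNReal.ofReal (1 - a n) * ν B
          + (ENNReal.ofReal (a n) / (n : ℝ≥0∞)) * ∑ i : Fin n, R (x i) B)
        ∂(P.map (fun ω (i : Fin n) => X i ω))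

/-- Hypothesis (H): `X` is exchangeable with marginal distribution `ν`, `R` is a
probability kernel, and the predictive distributions are as in `PredEq` with
constants `a n ∈ (0,1)`. -/
structure HypH {Ω 𝕏 : Type*} [MeasurableSpace Ω] [MeasurableSpace 𝕏]
    (P : Measure Ω) (X : ℕ → Ω → 𝕏) (ν : Measure 𝕏) (R : Kernel 𝕏 𝕏) (a : ℕ → ℝ) : Prop where
  probP : IsProbabilityMeasure P
  probν : IsProbabilityMeasure ν
  markov : IsMarkovKernel R
  meas : ∀ n, Measurable (X n)
  exch : Exchangeable P X
  marginal : ∀ n, P.map (X n) = ν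
  a_mem : ∀ n, 1 ≤ n → a n ∈ Set.Ioo (0 : ℝ) 1
  pred : PredEq P X ν R a

/-- `X` is a measure-valued Pólya urn sequence with parameters `(θ, ν, R)`. -/
def IsMVPS {Ω 𝕏 : Type*} [MeasurableSpace Ω] [MeasurableSpace 𝕏]
    (P : Measure Ω) (X : ℕ → Ω → 𝕏) (θ : ℝ) (ν : Measure 𝕏) (R : Kernel 𝕏 𝕏) : Prop :=
  0 < θ ∧ P.map (X 0) = ν ∧
  ∀ n : ℕ, 1 ≤ n → ∀ B : Set 𝕏, MeasurableSet B → ∀ A : Set (Fin n → 𝕏), MeasurableSet A →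
    P {ω | (fun i : Fin n => X i ω) ∈ A ∧ X n ω ∈ B} =
      ∫⁻ x in A, ((ENNReal.ofReal θ * ν B + ∑ i : Fin n, R (x i) B)
          / (ENNReal.ofReal θ + (n : ℝ≥0∞)))
        ∂(P.map (fun ω (i : Fin n) => X i ω))

/- ### Auxiliary lemmas -/

/-- Two finite measures on a product space agreeing on all measurable rectangles agree. -/
lemma ext_prod_meas {α β : Type*} [MeasurableSpace α] [MeasurableSpace β]
    {μ₁ μ₂ : Measure (α × β)} [IsFiniteMeasure μ₁] [IsFiniteMeasure μ₂]
    (h : ∀ s t : Set _, MeasurableSet s → MeasurableSet t → μ₁ (s ×ˢ t) = μ₂ (s ×ˢ t)) :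
    μ₁ = μ₂ := by
  refine MeasureTheory.ext_of_generate_finite _ generateFrom_prod.symm isPiSystem_prod
    (fun s hs => ?_) ?_
  · rcases hs with ⟨u, hu, v, hv, rfl⟩
    exact h u v hu hv
  · simpa using h Set.univ Set.univ MeasurableSet.univ MeasurableSet.univ

/-- If `∫_{B₀} R_x(B) ν(dx) = ν(B₀)ν(B)` for all measurable sets, then `R_x = ν`
for `ν`-a.e. `x`. -/
lemma kernel_ae_const {𝕏 : Type*} [MeasurableSpace 𝕏] [StandardBorelSpace 𝕏]
    (ν : Measure 𝕏) [IsProbabilityMeasure ν] (R : Kernel 𝕏 𝕏) [IsMarkovKernel R]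
    (h : ∀ B₀ B : Set 𝕏, MeasurableSet B₀ → MeasurableSet B →
      ∫⁻ x in B₀, R x B ∂ν = ν B₀ * ν B) :
    ∀ᵐ x ∂ν, (R x : Measure 𝕏) = ν := by
  rcases isEmpty_or_nonempty 𝕏 with hE | hN
  · exact Filter.Eventually.of_forall (fun x => (IsEmpty.false x).elim)
  set ρ : Measure (𝕏 × 𝕏) := ν ⊗ₘ R with hρdef
  have hfst : ρ.fst = ν := Measure.fst_compProd ν R
  have hρ : ρ = ν.prod ν := by
    apply ext_prod_meas
    intro s t hs ht
    rw [hρdef, Measure.compProd_apply_prod hs ht, Measure.prod_prod]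
    exact h s t hs ht
  have h1 : ∀ᵐ x ∂ν, (R x : Measure 𝕏) = ρ.condKernel x := by
    have := ProbabilityTheory.eq_condKernel_of_measure_eq_compProd R (ρ := ρ) (by rw [hfst])
    rwa [hfst] at this
  have h2 : ∀ᵐ x ∂ν, (Kernel.const 𝕏 ν x : Measure 𝕏) = ρ.condKernel x := by
    have := ProbabilityTheory.eq_condKernel_of_measure_eq_compProd (Kernel.const 𝕏 ν) (ρ := ρ)
      (by rw [hfst, Measure.compProd_const, ← hρ])
    rwa [hfst] at this
  filter_upwards [h1, h2] with x hx1 hx2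
  rw [hx1, ← hx2, Kernel.const_apply]

/-- Stationarity: under (H), `ν` is `R`-invariant. -/
lemma nu_invariant {Ω 𝕏 : Type*} [MeasurableSpace Ω] [MeasurableSpace 𝕏]
    (P : Measure Ω) (X : ℕ → Ω → 𝕏) (ν : Measure 𝕏) (R : Kernel 𝕏 𝕏) (a : ℕ → ℝ)
    [IsProbabilityMeasure P] [IsProbabilityMeasure ν] [IsMarkovKernel R]
    (meas : ∀ n, Measurable (X n))
    (marginal : ∀ n, P.map (X n) = ν)
    (ha : a 1 ∈ Set.Ioo (0:ℝ) 1)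
    (pred : PredEq P X ν R a)
    (B : Set 𝕏) (hB : MeasurableSet B) :
    ∫⁻ x, R x B ∂ν = ν B := by
  have hY : ∀ n : ℕ, Measurable (fun ω (i : Fin n) => X i ω) :=
    fun n => measurable_pi_lambda _ (fun i => meas i)
  have h := pred 1 le_rfl B hB Set.univ MeasurableSet.univ
  have hset : {ω | (fun i : Fin 1 => X i ω) ∈ Set.univ ∧ X 1 ω ∈ B} = X 1 ⁻¹' B := by
    ext ω; simp [Set.mem_preimage]
  rw [hset, Measure.restrict_univ] at h
  have hLHS : P (X 1 ⁻¹' B) = ν B := by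
    rw [← marginal 1, Measure.map_apply (meas 1) hB]
  rw [hLHS] at h
  have hmeasR : Measurable (fun x : Fin 1 → 𝕏 => R (x 0) B) :=
    (R.measurable_coe hB).comp (measurable_pi_apply 0)
  haveI : IsProbabilityMeasure (P.map (fun ω (i : Fin 1) => X i ω)) :=
    Measure.isProbabilityMeasure_map (hY 1).aemeasurable
  rw [show (fun (x : Fin 1 → 𝕏) => ENNReal.ofReal (1 - a 1) * ν B
          + (ENNReal.ofReal (a 1) / ((1:ℕ) : ℝ≥0∞)) * ∑ i : Fin 1, R (x i) B)
      = (fun x => ENNReal.ofReal (1 - a 1) * ν B + ENNReal.ofReal (a 1) * R (x 0) B) by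
      funext x; simp] at h
  rw [lintegral_add_left measurable_const, lintegral_const,
    lintegral_const_mul _ hmeasR, measure_univ, mul_one,
    lintegral_map hmeasR (hY 1)] at h
  have hmarg0 : ∫⁻ ω, R (X 0 ω) B ∂P = ∫⁻ y, R y B ∂ν := by
    rw [← marginal 0, lintegral_map (R.measurable_coe hB) (meas 0)]
  have hbeta : ∫⁻ (ω : Ω), (R ((fun i : Fin 1 => X (↑i) ω) 0)) B ∂P = ∫⁻ y, R y B ∂ν := by
    simp only [Fin.val_zero] at hmarg0 ⊢
    exact hmarg0
  rw [hbeta] at h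
  set W := ∫⁻ y, R y B ∂ν with hWdef
  have hct : ENNReal.ofReal (1 - a 1) + ENNReal.ofReal (a 1) = 1 := by
    rw [← ENNReal.ofReal_add (by linarith [ha.2]) ha.1.le]
    norm_num
  have ht0 : ENNReal.ofReal (a 1) ≠ 0 := by
    simp [ENNReal.ofReal_eq_zero, not_le, ha.1]
  have hx : ν B ≠ ∞ := measure_ne_top _ _
  have h' : ENNReal.ofReal (1 - a 1) * ν B + ENNReal.ofReal (a 1) * ν B
      = ENNReal.ofReal (1 - a 1) * ν B + ENNReal.ofReal (a 1) * W := by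
    conv_lhs => rw [← add_mul, hct, one_mul]
    exact h
  have h'' := (ENNReal.add_right_inj (ENNReal.mul_ne_top ENNReal.ofReal_ne_top hx)).mp h'
  exact ((ENNReal.mul_right_inj ht0 ENNReal.ofReal_ne_top).mp h'').symm

/-- The joint law of `(X 0, X 1)` under (H). -/
lemma joint_two {Ω 𝕏 : Type*} [MeasurableSpace Ω] [MeasurableSpace 𝕏]
    (P : Measure Ω) (X : ℕ → Ω → 𝕏) (ν : Measure 𝕏) (R : Kernel 𝕏 𝕏) (a : ℕ → ℝ)
    [IsProbabilityMeasure P] [IsProbabilityMeasure ν] [IsMarkovKernel R]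
    [IsFiniteMeasure (ENNReal.ofReal (1 - a 1) • (ν.prod ν) + ENNReal.ofReal (a 1) • (ν ⊗ₘ R))]
    (meas : ∀ n, Measurable (X n))
    (marginal : ∀ n, P.map (X n) = ν)
    (pred : PredEq P X ν R a) :
    P.map (fun ω => (X 0 ω, X 1 ω))
      = ENNReal.ofReal (1 - a 1) • (ν.prod ν) + ENNReal.ofReal (a 1) • (ν ⊗ₘ R) := by
  have hY : ∀ n : ℕ, Measurable (fun ω (i : Fin n) => X i ω) :=
    fun n => measurable_pi_lambda _ (fun i => meas i)
  apply ext_prod_meas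
  intro s t hs ht
  have hA : MeasurableSet ((fun x : Fin 1 → 𝕏 => x 0) ⁻¹' s) := (measurable_pi_apply 0) hs
  have h := pred 1 le_rfl t ht ((fun x : Fin 1 → 𝕏 => x 0) ⁻¹' s) hA
  have hset : {ω | (fun i : Fin 1 => X i ω) ∈ ((fun x : Fin 1 → 𝕏 => x 0) ⁻¹' s) ∧ X 1 ω ∈ t}
      = (fun ω => (X 0 ω, X 1 ω)) ⁻¹' (s ×ˢ t) := by
    ext ω; simp [Set.mem_preimage]
  rw [hset] at h
  rw [Measure.map_apply ((meas 0).prodMk (meas 1)) (hs.prod ht), h]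
  have hmeasR : Measurable (fun x : Fin 1 → 𝕏 => R (x 0) t) :=
    (R.measurable_coe ht).comp (measurable_pi_apply 0)
  rw [show (fun (x : Fin 1 → 𝕏) => ENNReal.ofReal (1 - a 1) * ν t
          + (ENNReal.ofReal (a 1) / ((1:ℕ) : ℝ≥0∞)) * ∑ i : Fin 1, R (x i) t)
      = (fun x => ENNReal.ofReal (1 - a 1) * ν t + ENNReal.ofReal (a 1) * R (x 0) t) by
      funext x; simp]
  rw [lintegral_add_left measurable_const, setLIntegral_const,
    lintegral_const_mul _ hmeasR, setLIntegral_map hA hmeasR (hY 1)]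
  have hμA : (P.map (fun ω (i : Fin 1) => X i ω)) ((fun x : Fin 1 → 𝕏 => x 0) ⁻¹' s) = ν s := by
    rw [Measure.map_apply (hY 1) hA, ← marginal 0, Measure.map_apply (meas 0) hs]
    rfl
  have hsetint : ∫⁻ ω in (fun ω (i : Fin 1) => X i ω) ⁻¹' ((fun x : Fin 1 → 𝕏 => x 0) ⁻¹' s),
      R ((fun i : Fin 1 => X i ω) 0) t ∂P = ∫⁻ y in s, R y t ∂ν := by
    rw [show (fun ω (i : Fin 1) => X i ω) ⁻¹' ((fun x : Fin 1 → 𝕏 => x 0) ⁻¹' s) = X 0 ⁻¹' s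
        from rfl, ← marginal 0, setLIntegral_map hs (R.measurable_coe ht) (meas 0)]
    rfl
  rw [hsetint, hμA]
  simp only [Measure.add_apply, Measure.smul_apply, smul_eq_mul, Measure.prod_prod,
    Measure.compProd_apply_prod hs ht]
  ring_nf

/-- Exchangeability: the joint law of `(X 0, X i)` equals that of `(X 0, X 1)`. -/
lemma pair_exchange {Ω 𝕏 : Type*} [MeasurableSpace Ω] [MeasurableSpace 𝕏]
    (P : Measure Ω) (X : ℕ → Ω → 𝕏)
    (meas : ∀ n, Measurable (X n))
    (exch : Exchangeable P X)
    (i : ℕ) (hi : 1 ≤ i) :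
    P.map (fun ω => (X 0 ω, X i ω)) = P.map (fun ω => (X 0 ω, X 1 ω)) := by
  have h0i : (0:ℕ) < i + 1 := Nat.succ_pos _
  have h1i : (1:ℕ) < i + 1 := Nat.succ_lt_succ (Nat.lt_of_lt_of_le Nat.zero_lt_one hi)
  have hii : i < i + 1 := Nat.lt_succ_self _
  set σ : Equiv.Perm (Fin (i+1)) := Equiv.swap ⟨1, h1i⟩ ⟨i, hii⟩ with hσ
  have hE := exch (i+1) σ
  have hg : Measurable (fun x : Fin (i+1) → 𝕏 => (x ⟨0, h0i⟩, x ⟨i, hii⟩)) :=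
    (measurable_pi_apply _).prodMk (measurable_pi_apply _)
  have hgE := congrArg (fun μ => Measure.map (fun x : Fin (i+1) → 𝕏 => (x ⟨0,h0i⟩, x ⟨i,hii⟩)) μ) hE
  rw [Measure.map_map hg (measurable_pi_lambda _ (fun j => meas _)),
      Measure.map_map hg (measurable_pi_lambda _ (fun j => meas _))] at hgE
  have hσ0 : σ (0 : Fin (i+1)) = (0 : Fin (i+1)) := by
    rw [hσ]
    apply Equiv.swap_apply_of_ne_of_ne
    · exact fun h => absurd (congrArg Fin.val h) (by simp)
    · exact fun h => absurd (congrArg Fin.val h) (by simp only [Fin.val_zero]; omega)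
  have hσi : σ ⟨i, hii⟩ = ⟨1, h1i⟩ := Equiv.swap_apply_right _ _
  have hL : ((fun x : Fin (i+1) → 𝕏 => (x ⟨0,h0i⟩, x ⟨i,hii⟩)) ∘ (fun ω (j : Fin (i+1)) => X (σ j) ω))
      = fun ω => (X 0 ω, X 1 ω) := by
    funext ω
    simp [hσ0, hσi]
  have hR : ((fun x : Fin (i+1) → 𝕏 => (x ⟨0,h0i⟩, x ⟨i,hii⟩)) ∘ (fun ω (j : Fin (i+1)) => X j ω))
      = fun ω => (X 0 ω, X i ω) := by
    funext ω; rfl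
  rw [hL, hR] at hgE
  exact hgE.symm

/-- The master equation derived from (H): for every `n ≥ 1` and measurable `B₀, B`. -/
lemma master_eq {Ω 𝕏 : Type*} [MeasurableSpace Ω] [MeasurableSpace 𝕏]
    (P : Measure Ω) (X : ℕ → Ω → 𝕏) (ν : Measure 𝕏) (R : Kernel 𝕏 𝕏) (a : ℕ → ℝ)
    [IsProbabilityMeasure P] [IsProbabilityMeasure ν] [IsMarkovKernel R]
    (meas : ∀ n, Measurable (X n))
    (marginal : ∀ n, P.map (X n) = ν)
    (pred : PredEq P X ν R a)
    (B₀ B : Set 𝕏) (hB₀ : MeasurableSet B₀) (hB : MeasurableSet B)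
    (hinv : ∫⁻ x, R x B ∂ν = ν B)
    (hpair : ∀ i : ℕ, 1 ≤ i → P.map (fun ω => (X 0 ω, X i ω))
      = ENNReal.ofReal (1 - a 1) • (ν.prod ν) + ENNReal.ofReal (a 1) • (ν ⊗ₘ R))
    (n : ℕ) (hn : 1 ≤ n) :
    ENNReal.ofReal (1 - a 1) * (ν B₀ * ν B) + ENNReal.ofReal (a 1) * (∫⁻ x in B₀, R x B ∂ν)
      = ENNReal.ofReal (1 - a n) * ν B * ν B₀
        + (ENNReal.ofReal (a n) / (n : ℝ≥0∞)) * ((∫⁻ x in B₀, R x B ∂ν)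
          + (n - 1 : ℕ) * (ENNReal.ofReal (1 - a 1) * (ν B * ν B₀)
              + ENNReal.ofReal (a 1) * ∫⁻ x in B₀, (∫⁻ y, R y B ∂(R x)) ∂ν)) := by
  have hY : ∀ k : ℕ, Measurable (fun ω (i : Fin k) => X i ω) :=
    fun k => measurable_pi_lambda _ (fun i => meas i)
  obtain ⟨m, rfl⟩ : ∃ m, n = m + 1 := ⟨n - 1, (Nat.succ_pred_eq_of_pos hn).symm⟩
  set n := m + 1
  set m₂ : Measure (𝕏 × 𝕏) :=
    ENNReal.ofReal (1 - a 1) • (ν.prod ν) + ENNReal.ofReal (a 1) • (ν ⊗ₘ R) with hm₂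
  set I := ∫⁻ x in B₀, R x B ∂ν with hI
  set J := ∫⁻ x in B₀, (∫⁻ y, R y B ∂(R x)) ∂ν with hJ
  set A : Set (Fin n → 𝕏) := (fun x : Fin n → 𝕏 => x 0) ⁻¹' B₀ with hA
  have hAm : MeasurableSet A := (measurable_pi_apply 0) hB₀
  have h := pred n (Nat.le_add_left 1 m) B hB A hAm
  have hset : {ω | (fun i : Fin n => X i ω) ∈ A ∧ X n ω ∈ B}
      = (fun ω => (X 0 ω, X n ω)) ⁻¹' (B₀ ×ˢ B) := rfl
  rw [hset, show P ((fun ω => (X 0 ω, X n ω)) ⁻¹' (B₀ ×ˢ B))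
      = (P.map (fun ω => (X 0 ω, X n ω))) (B₀ ×ˢ B) from
        (Measure.map_apply ((meas 0).prodMk (meas n)) (hB₀.prod hB)).symm,
    hpair n (Nat.le_add_left 1 m)] at h
  have hrect : m₂ (B₀ ×ˢ B) = ENNReal.ofReal (1 - a 1) * (ν B₀ * ν B) + ENNReal.ofReal (a 1) * I := by
    simp only [hm₂, Measure.add_apply, Measure.smul_apply, smul_eq_mul, Measure.prod_prod,
      Measure.compProd_apply_prod hB₀ hB, hI]
  rw [hrect] at h
  rw [h]; clear h
  have hμA : (P.map (fun ω (i : Fin n) => X i ω)) A = ν B₀ := by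
    rw [Measure.map_apply (hY n) hAm, ← marginal 0, Measure.map_apply (meas 0) hB₀]
    rfl
  have hmeasSum : Measurable (fun x : Fin n → 𝕏 => ∑ i : Fin n, R (x i) B) :=
    Finset.measurable_sum _ (fun i _ => (R.measurable_coe hB).comp (measurable_pi_apply i))
  rw [lintegral_add_left measurable_const, setLIntegral_const,
    lintegral_const_mul _ hmeasSum, hμA]
  have hsplit := lintegral_finset_sum (μ := (P.map (fun ω (i : Fin n) => X i ω)).restrict A)
    (f := fun (i : Fin n) (x : Fin n → 𝕏) => R (x i) B) Finset.univ
    (fun i _ => (R.measurable_coe hB).comp (measurable_pi_apply i))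
  rw [hsplit]
  have hT0 : ∫⁻ x in A, R (x 0) B ∂(P.map (fun ω (i : Fin n) => X i ω)) = I := by
    rw [setLIntegral_map (f := fun x : Fin n → 𝕏 => R (x 0) B) hAm
      ((R.measurable_coe hB).comp (measurable_pi_apply 0)) (hY n)]
    rw [show (fun ω (i : Fin n) => X i ω) ⁻¹' A = X 0 ⁻¹' B₀ from rfl, hI, ← marginal 0,
      setLIntegral_map hB₀ (R.measurable_coe hB) (meas 0)]
    rfl
  set W : ℝ≥0∞ := ∫⁻ p in B₀ ×ˢ (Set.univ : Set 𝕏), R p.2 B ∂m₂ with hW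
  have hmeas2 : Measurable (fun p : 𝕏 × 𝕏 => R p.2 B) := (R.measurable_coe hB).comp measurable_snd
  have hTi : ∀ i : Fin n, i ≠ 0 →
      ∫⁻ x in A, R (x i) B ∂(P.map (fun ω (k : Fin n) => X k ω)) = W := by
    intro i hi
    have hival : 1 ≤ (i : ℕ) := by
      rcases Nat.eq_zero_or_pos (i : ℕ) with h0 | h0
      · exact absurd (Fin.ext h0 : i = 0) hi
      · exact h0
    rw [setLIntegral_map (f := fun x : Fin n → 𝕏 => R (x i) B) hAm
      ((R.measurable_coe hB).comp (measurable_pi_apply i)) (hY n)]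
    have hpre : (fun ω (k : Fin n) => X k ω) ⁻¹' A
        = (fun ω => (X 0 ω, X i ω)) ⁻¹' (B₀ ×ˢ (Set.univ : Set 𝕏)) := by
      ext ω; simp [hA]
    rw [hpre, ← setLIntegral_map (hB₀.prod MeasurableSet.univ) hmeas2
      ((meas 0).prodMk (meas i)), hpair i hival]
  have hsum : ∑ i : Fin n, ∫⁻ x in A, R (x i) B ∂(P.map (fun ω (k : Fin n) => X k ω))
      = I + m * W := by
    rw [Fin.sum_univ_succ]
    rw [hT0]
    congr 1
    rw [Finset.sum_congr rfl (fun j _ => hTi j.succ (Fin.succ_ne_zero j))]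
    simp [Finset.sum_const, mul_comm]
  rw [hsum]
  have hWval : W = ENNReal.ofReal (1 - a 1) * (ν B * ν B₀) + ENNReal.ofReal (a 1) * J := by
    rw [hW, hm₂, Measure.restrict_add, Measure.restrict_smul, Measure.restrict_smul,
      lintegral_add_measure, lintegral_smul_measure, lintegral_smul_measure]
    congr 1
    · congr 1
      rw [← Measure.compProd_const,
        Measure.setLIntegral_compProd hmeas2 hB₀ MeasurableSet.univ]
      simp only [Kernel.const_apply, Measure.restrict_univ, hinv]
      rw [setLIntegral_const]
    · congr 1
      rw [Measure.setLIntegral_compProd hmeas2 hB₀ MeasurableSet.univ]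
      simp only [Measure.restrict_univ, hJ]
  rw [hWval]
  simp [Nat.add_sub_cancel]
  rw [show ((n : ℝ≥0∞) - 1) = m from ENNReal.sub_eq_of_eq_add ENNReal.one_ne_top (by simp [n])]

/-- Conversion of the master equation to a real-valued equation. -/
lemma master_eq_real {p q I J : ℝ≥0∞} (hp : p ≠ ∞) (hq : q ≠ ∞) (hI : I ≠ ∞) (hJ : J ≠ ∞)
    {a1 an : ℝ} (h1 : a1 ∈ Set.Ioo (0:ℝ) 1) (hn1 : an ∈ Set.Ioo (0:ℝ) 1)
    (n : ℕ) (hn : 1 ≤ n)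
    (h : ENNReal.ofReal (1 - a1) * (p * q) + ENNReal.ofReal a1 * I
      = ENNReal.ofReal (1 - an) * q * p + (ENNReal.ofReal an / (n : ℝ≥0∞))
          * (I + (n - 1 : ℕ) * (ENNReal.ofReal (1 - a1) * (q * p) + ENNReal.ofReal a1 * J))) :
    (1 - a1) * (p.toReal * q.toReal) + a1 * I.toReal
      = (1 - an) * (p.toReal * q.toReal) + (an / n)
          * (I.toReal + ((n:ℝ) - 1) * ((1 - a1) * (p.toReal * q.toReal) + a1 * J.toReal)) := by
  have h10 : (0:ℝ) ≤ 1 - a1 := by linarith [h1.2]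
  have hn0 : (0:ℝ) ≤ 1 - an := by linarith [hn1.2]
  have hK : (ENNReal.ofReal (1 - a1) * (q * p) + ENNReal.ofReal a1 * J) ≠ ∞ :=
    ENNReal.add_ne_top.mpr ⟨ENNReal.mul_ne_top ofReal_ne_top (ENNReal.mul_ne_top hq hp),
      ENNReal.mul_ne_top ofReal_ne_top hJ⟩
  have hcK : ((n - 1 : ℕ) * (ENNReal.ofReal (1 - a1) * (q * p) + ENNReal.ofReal a1 * J)) ≠ ∞ :=
    ENNReal.mul_ne_top (natCast_ne_top _) hK
  have hIcK : (I + (n - 1 : ℕ) * (ENNReal.ofReal (1 - a1) * (q * p) + ENNReal.ofReal a1 * J)) ≠ ∞ :=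
    ENNReal.add_ne_top.mpr ⟨hI, hcK⟩
  have e := congrArg ENNReal.toReal h
  rw [ENNReal.toReal_add (ENNReal.mul_ne_top ofReal_ne_top (ENNReal.mul_ne_top hp hq))
        (ENNReal.mul_ne_top ofReal_ne_top hI),
      ENNReal.toReal_add (ENNReal.mul_ne_top (ENNReal.mul_ne_top ofReal_ne_top hq) hp)
        (ENNReal.mul_ne_top ((ENNReal.div_lt_top ofReal_ne_top
          (by exact_mod_cast Nat.one_le_iff_ne_zero.mp hn : ((n:ℝ≥0∞) ≠ 0))).ne) hIcK)] at e
  simp only [ENNReal.toReal_mul, ENNReal.toReal_div] at e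
  rw [ENNReal.toReal_add hI hcK] at e
  simp only [ENNReal.toReal_mul] at e
  rw [ENNReal.toReal_add (ENNReal.mul_ne_top ofReal_ne_top (ENNReal.mul_ne_top hq hp))
        (ENNReal.mul_ne_top ofReal_ne_top hJ)] at e
  simp only [ENNReal.toReal_mul, ENNReal.toReal_natCast] at e
  rw [ENNReal.toReal_ofReal h10, ENNReal.toReal_ofReal hn0, ENNReal.toReal_ofReal h1.1.le,
    ENNReal.toReal_ofReal hn1.1.le] at e
  rw [Nat.cast_sub hn, Nat.cast_one] at e
  linarith [e]

/-- The real-algebra endgame. -/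
lemma algebra_final {a : ℕ → ℝ} (ha : ∀ n, 1 ≤ n → a n ∈ Set.Ioo (0:ℝ) 1)
    {C I J : ℝ} (hIC : I ≠ C)
    (E : ∀ n : ℕ, 1 ≤ n → (1 - a 1) * C + a 1 * I
      = (1 - a n) * C + (a n / n) * (I + ((n:ℝ) - 1) * ((1 - a 1) * C + a 1 * J))) :
    (a 2 - 2 * a 1 + a 1 * a 2) / (a 1 * a 2) ≤ 0 ∧
      ∀ n : ℕ, 1 ≤ n →
        a n = n / (((n : ℝ) - 1) * (1 - (a 2 - 2 * a 1 + a 1 * a 2) / (a 1 * a 2)) + (a 1)⁻¹) := by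
  set α := a 1 with hαdef
  set β := a 2 with hβdef
  have hα := ha 1 le_rfl
  have hβ := ha 2 (by norm_num)
  have hα0 : α ≠ 0 := ne_of_gt hα.1
  have hβ0 : β ≠ 0 := ne_of_gt hβ.1
  set c : ℝ := (β - 2 * α + α * β) / (α * β) with hcdef
  have h2ab : 2 * α - β = α * β * (1 - c) := by
    rw [hcdef]; field_simp; ring
  have key : ∀ n : ℕ, 1 ≤ n → a n * (β + ((n:ℝ) - 1) * (2 * α - β)) = (n:ℝ) * α * β := by
    intro n hn
    set G := a n with hGdef
    set m : ℝ := (n : ℝ) with hmdef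
    have hm1 : (1:ℝ) ≤ m := by rw [hmdef]; exact_mod_cast hn
    have hm0 : m ≠ 0 := by linarith
    have h2 := E 2 (by norm_num)
    norm_num at h2
    have hKval : β * ((1 - α) * C + α * J) = 2 * ((β - α) * C + α * I) - β * I := by
      linear_combination (-2 : ℝ) * h2
    have hne := E n hn
    rw [← hmdef, ← hGdef] at hne
    have hne' : m * ((1 - α) * C + α * I)
        = m * (1 - G) * C + G * (I + (m - 1) * ((1 - α) * C + α * J)) := by
      have h := congrArg (fun x => m * x) hne
      rw [h]
      field_simp
    have hp : (α * m * β - G * (β + (m - 1) * (2 * α - β))) * (I - C) = 0 := by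
      linear_combination β * hne' + G * (m - 1) * hKval
    rcases mul_eq_zero.mp hp with h | h
    · linarith [sub_eq_zero.mp (by linarith : α * m * β - G * (β + (m-1) * (2*α - β)) = 0)]
    · exact absurd (sub_eq_zero.mp h) hIC
  have hbra : ∀ n : ℕ, 1 ≤ n → 0 < β + ((n:ℝ) - 1) * (2 * α - β) := by
    intro n hn
    have hk := key n hn
    have hn0 : (0:ℝ) < (n:ℝ) := by exact_mod_cast hn
    have hrhs : (0:ℝ) < (n:ℝ) * α * β := mul_pos (mul_pos hn0 hα.1) hβ.1
    nlinarith [(ha n hn).1]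
  constructor
  · by_contra hc
    push_neg at hc
    obtain ⟨k, hk⟩ := exists_nat_gt ((1/α - 1)/c)
    set n := k + 1 with hndef
    have hn : 1 ≤ n := Nat.le_add_left 1 k
    have hkey := key n hn
    have hlt := (ha n hn).2
    have hpos := (ha n hn).1
    have hbr := hbra n hn
    have hcast : (n:ℝ) = (k:ℝ) + 1 := by push_cast [hndef]; ring
    have h1 : (n:ℝ) * α * β < β + ((n:ℝ) - 1) * (2*α - β) := by nlinarith
    rw [h2ab, hcast] at h1
    have hαβ : (0:ℝ) < α * β := mul_pos hα.1 hβ.1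
    have h1' : α * β + (k:ℝ) * c * (α * β) < β := by nlinarith [h1]
    have h2' : α * (1 + (k:ℝ) * c) < 1 :=
      (mul_lt_mul_iff_left₀ hβ.1).mp (by nlinarith [h1'] : (α * (1 + (k:ℝ) * c)) * β < 1 * β)
    have h3 : (1/α - 1) < (k:ℝ) * c := by
      have hk' := (div_lt_iff₀ hc).mp hk
      linarith
    have h4 : α * (1 + (k:ℝ) * c) > α * (1/α) := by
      have : (1:ℝ)/α < 1 + (k:ℝ) * c := by linarith
      exact (mul_lt_mul_iff_right₀ hα.1).mpr this
    rw [mul_one_div, div_self hα0] at h4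
    linarith
  · intro n hn
    have hkey := key n hn
    have hbr := hbra n hn
    have hD : ((n:ℝ) - 1) * (1 - c) + α⁻¹ = (β + ((n:ℝ) - 1) * (2*α - β)) / (α * β) := by
      rw [h2ab]
      field_simp
      ring
    rw [hD, div_div_eq_mul_div, eq_div_iff (ne_of_gt hbr)]
    linear_combination hkey

/-- under Hypothesis (H), if `ν({x : R_x ≠ ν}) > 0` then `c* ≤ 0`
and `a_n = n/((n-1)(1-c*) + a₁⁻¹)`. -/
theorem coefficients_formula_of_nontrivial {Ω 𝕏 : Type*} [MeasurableSpace Ω] [MeasurableSpace 𝕏]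
    [StandardBorelSpace 𝕏]
    (P : Measure Ω) (X : ℕ → Ω → 𝕏) (ν : Measure 𝕏) (R : Kernel 𝕏 𝕏) (a : ℕ → ℝ)
    (hH : HypH P X ν R a)
    (hD : 0 < ν {x | (R x : Measure 𝕏) ≠ ν}) :
    (a 2 - 2 * a 1 + a 1 * a 2) / (a 1 * a 2) ≤ 0 ∧
      ∀ n : ℕ, 1 ≤ n →
        a n = n / (((n : ℝ) - 1) * (1 - (a 2 - 2 * a 1 + a 1 * a 2) / (a 1 * a 2)) + (a 1)⁻¹) := by
  obtain ⟨probP, probν, markov, meas, exch, marginal, a_mem, pred⟩ := hH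
  haveI := probP; haveI := probν; haveI := markov
  haveI : IsFiniteMeasure
      (ENNReal.ofReal (1 - a 1) • (ν.prod ν) + ENNReal.ofReal (a 1) • (ν ⊗ₘ R)) := by
    constructor
    simp only [Measure.add_apply, Measure.smul_apply, smul_eq_mul]
    exact ENNReal.add_lt_top.mpr ⟨ENNReal.mul_lt_top ENNReal.ofReal_lt_top (measure_lt_top _ _),
      ENNReal.mul_lt_top ENNReal.ofReal_lt_top (measure_lt_top _ _)⟩
  have ha1 := a_mem 1 le_rfl
  have hinv : ∀ B : Set 𝕏, MeasurableSet B → ∫⁻ x, R x B ∂ν = ν B :=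
    fun B hB => nu_invariant P X ν R a meas marginal ha1 pred B hB
  have hpair : ∀ i : ℕ, 1 ≤ i → P.map (fun ω => (X 0 ω, X i ω))
      = ENNReal.ofReal (1 - a 1) • (ν.prod ν) + ENNReal.ofReal (a 1) • (ν ⊗ₘ R) := by
    intro i hi
    rw [pair_exchange P X meas exch i hi]
    exact joint_two P X ν R a meas marginal pred
  -- witness sets where independence fails
  have hwit : ∃ B₀ B : Set 𝕏, MeasurableSet B₀ ∧ MeasurableSet B ∧
      (∫⁻ x in B₀, R x B ∂ν) ≠ ν B₀ * ν B := by
    by_contra hcon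
    push_neg at hcon
    have hae := kernel_ae_const ν R (fun B₀ B hB₀ hB => hcon B₀ B hB₀ hB)
    have h0 : ν {x | (R x : Measure 𝕏) ≠ ν} = 0 := hae
    rw [h0] at hD
    exact lt_irrefl 0 hD
  obtain ⟨B₀, B, hB₀, hB, hne⟩ := hwit
  set I := ∫⁻ x in B₀, R x B ∂ν with hIdef
  set J := ∫⁻ x in B₀, (∫⁻ y, R y B ∂(R x)) ∂ν with hJdef
  have hIle : I ≤ ν B₀ := by
    calc I ≤ ∫⁻ _ in B₀, 1 ∂ν := lintegral_mono (fun x => prob_le_one)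
    _ = ν B₀ := by simp
  have hJle : J ≤ ν B₀ := by
    have hstep : J ≤ ∫⁻ _ in B₀, 1 ∂ν := by
      refine lintegral_mono (fun x => ?_)
      calc (∫⁻ y, R y B ∂(R x)) ≤ ∫⁻ _, 1 ∂(R x) := lintegral_mono (fun y => prob_le_one)
      _ = 1 := by simp
    simpa using hstep
  have hInt : I ≠ ∞ := (lt_of_le_of_lt hIle (measure_lt_top _ _)).ne
  have hJnt : J ≠ ∞ := (lt_of_le_of_lt hJle (measure_lt_top _ _)).ne
  have hp : ν B₀ ≠ ∞ := measure_ne_top _ _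
  have hq : ν B ≠ ∞ := measure_ne_top _ _
  -- real-valued data
  have hIC : I.toReal ≠ (ν B₀).toReal * (ν B).toReal := by
    intro h
    apply hne
    rw [← ENNReal.toReal_mul] at h
    exact (ENNReal.toReal_eq_toReal_iff' hInt (ENNReal.mul_ne_top hp hq)).mp h
  have E : ∀ n : ℕ, 1 ≤ n → (1 - a 1) * ((ν B₀).toReal * (ν B).toReal) + a 1 * I.toReal
      = (1 - a n) * ((ν B₀).toReal * (ν B).toReal) + (a n / n) * (I.toReal
          + ((n:ℝ) - 1) * ((1 - a 1) * ((ν B₀).toReal * (ν B).toReal) + a 1 * J.toReal)) := by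
    intro n hn
    exact master_eq_real hp hq hInt hJnt ha1 (a_mem n hn) n hn
      (master_eq P X ν R a meas marginal pred B₀ B hB₀ hB (hinv B hB) hpair n hn)
  exact algebra_final a_mem hIC E
end

section
/- Suppose Hypothesis (H) holds, set c* := (a_2 − 2a_1 + a_1a_2)/(a_1a_2), and assume R_x ≪ ν for ν-almost every x. If c* < 0, then R_x = ν for ν-almost every x. -/
open MeasureTheory ProbabilityTheory ENNReal

section AuxProofs
open Filter


lemma aux_countable_generatePiSystem {α : Type*} {S : Set (Set α)} (hS : S.Countable) :
    (generatePiSystem S).Countable := by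
  rcases S.eq_empty_or_nonempty with h | h
  · subst h
    have : generatePiSystem (∅ : Set (Set α)) ⊆ ∅ := by
      intro x hx
      induction hx with
      | base hs => exact hs
      | inter _ _ _ ih1 _ => exact ih1
    exact (Set.countable_empty).mono this
  · obtain ⟨u, rfl⟩ := hS.exists_eq_range h
    have : generatePiSystem (Set.range u) ⊆
        Set.range (fun F : Finset ℕ => ⋂ i ∈ (F : Set ℕ), u i) := by
      intro x hx
      induction hx with
      | base hs =>
        obtain ⟨n, rfl⟩ := hs
        exact ⟨{n}, by simp⟩
      | inter _ _ _ ih1 ih2 =>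
        obtain ⟨F1, rfl⟩ := ih1
        obtain ⟨F2, rfl⟩ := ih2
        refine ⟨F1 ∪ F2, ?_⟩
        simp only [Finset.coe_union, Set.biInter_union]
    exact (Set.countable_range _).mono this

lemma aux_essSup_affine {α : Type*} [MeasurableSpace α] (μ : Measure α) [IsProbabilityMeasure μ]
    (f : α → ℝ≥0∞) (c d : ℝ≥0∞) (hd : d ≠ ∞) :
    essSup (fun x => c + d * f x) μ = c + d * essSup f μ := by
  have hne : (ae μ).NeBot := ae_neBot.2 (IsProbabilityMeasure.ne_zero μ)
  have hmono : Monotone (fun x : ℝ≥0∞ => c + d * x) :=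
    fun x y h => add_le_add_right (mul_le_mul_right h d) c
  have hcont : ContinuousAt (fun x : ℝ≥0∞ => c + d * x) (essSup f μ) :=
    (continuous_const.add (ENNReal.continuous_const_mul hd)).continuousAt
  exact (hmono.map_limsup_of_continuousAt f hcont).symm

lemma aux_essInf_affine {α : Type*} [MeasurableSpace α] (μ : Measure α) [IsProbabilityMeasure μ]
    (f : α → ℝ≥0∞) (c d : ℝ≥0∞) (hd : d ≠ ∞) :
    essInf (fun x => c + d * f x) μ = c + d * essInf f μ := by
  have hne : (ae μ).NeBot := ae_neBot.2 (IsProbabilityMeasure.ne_zero μ)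
  have hmono : Monotone (fun x : ℝ≥0∞ => c + d * x) :=
    fun x y h => add_le_add_right (mul_le_mul_right h d) c
  have hcont : ContinuousAt (fun x : ℝ≥0∞ => c + d * x) (essInf f μ) :=
    (continuous_const.add (ENNReal.continuous_const_mul hd)).continuousAt
  exact (hmono.map_liminf_of_continuousAt f hcont).symm

lemma aux_ae_eq_of_forall {𝕏 : Type*} [MeasurableSpace 𝕏] [MeasurableSpace.CountablyGenerated 𝕏]
    (ν : Measure 𝕏) [IsProbabilityMeasure ν] (R : Kernel 𝕏 𝕏) [IsMarkovKernel R]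
    (h : ∀ B : Set 𝕏, MeasurableSet B → ∀ᵐ x ∂ν, R x B = ν B) :
    ∀ᵐ x ∂ν, (R x : Measure 𝕏) = ν := by
  set S := generatePiSystem (MeasurableSpace.countableGeneratingSet 𝕏) with hSdef
  have hScount : S.Countable :=
    aux_countable_generatePiSystem MeasurableSpace.countable_countableGeneratingSet
  have hSmeas : ∀ s ∈ S, MeasurableSet s := fun s hs =>
    generatePiSystem_measurableSet
      (fun t ht => MeasurableSpace.measurableSet_countableGeneratingSet ht) s hs
  have hgen : ‹MeasurableSpace 𝕏› = MeasurableSpace.generateFrom S := by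
    rw [hSdef, generateFrom_generatePiSystem_eq,
      MeasurableSpace.generateFrom_countableGeneratingSet]
  have hall : ∀ᵐ x ∂ν, ∀ s ∈ S, R x s = ν s :=
    (ae_ball_iff hScount).mpr (fun s hs => h s (hSmeas s hs))
  filter_upwards [hall] with x hx
  exact MeasureTheory.ext_of_generate_finite S hgen (isPiSystem_generatePiSystem _) hx
    (by simp)


variable {Ω 𝕏 : Type*} [MeasurableSpace Ω] [MeasurableSpace 𝕏]
  (P : Measure Ω) (X : ℕ → Ω → 𝕏) (ν : Measure 𝕏) (R : Kernel 𝕏 𝕏) (a : ℕ → ℝ)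
  [IsProbabilityMeasure P] [IsProbabilityMeasure ν] [IsMarkovKernel R]

lemma aux_main (hXm : ∀ n, Measurable (X n)) (hmarg : ∀ n, P.map (X n) = ν)
    (hα : a 1 ∈ Set.Ioo (0:ℝ) 1) (hβ : a 2 ∈ Set.Ioo (0:ℝ) 1)
    (hpred : ∀ n : ℕ, 1 ≤ n → ∀ B : Set 𝕏, MeasurableSet B → ∀ A : Set (Fin n → 𝕏), MeasurableSet A →
      P {ω | (fun i : Fin n => X i ω) ∈ A ∧ X n ω ∈ B} =
        ∫⁻ x in A, (ENNReal.ofReal (1 - a n) * ν B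
            + (ENNReal.ofReal (a n) / (n : ℝ≥0∞)) * ∑ i : Fin n, R (x i) B)
          ∂(P.map (fun ω (i : Fin n) => X i ω)))
    (hexch : ∀ (n : ℕ) (σ : Equiv.Perm (Fin n)),
      P.map (fun ω (i : Fin n) => X (σ i) ω) = P.map (fun ω (i : Fin n) => X i ω))
    (hac : ∀ᵐ x ∂ν, (R x : Measure 𝕏) ≪ ν)
    (hc : (a 2 - 2 * a 1 + a 1 * a 2) / (a 1 * a 2) < 0) :
    ∀ B : Set 𝕏, MeasurableSet B → ∀ᵐ x ∂ν, R x B = ν B := by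
  set c₁ : ℝ≥0∞ := ENNReal.ofReal (1 - a 1) with hc₁
  set d₁ : ℝ≥0∞ := ENNReal.ofReal (a 1) with hd₁
  set c₂ : ℝ≥0∞ := ENNReal.ofReal (1 - a 2) with hc₂
  set d₂ : ℝ≥0∞ := ENNReal.ofReal (a 2) / 2 with hd₂
  have hι1 : Measurable fun ω (i : Fin 1) => X i ω := measurable_pi_lambda _ fun i => hXm i
  have hι2 : Measurable fun ω (i : Fin 2) => X i ω := measurable_pi_lambda _ fun i => hXm i
  have transfer0 : ∀ (F : 𝕏 → ℝ≥0∞), Measurable F → ∀ A₀ : Set 𝕏, MeasurableSet A₀ →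
      ∫⁻ t in A₀, F t ∂ν = ∫⁻ ω in X 0 ⁻¹' A₀, F (X 0 ω) ∂P := by
    intro F hF A₀ hA₀
    rw [← hmarg 0, setLIntegral_map hA₀ hF (hXm 0)]
  have pred1 : ∀ B : Set 𝕏, MeasurableSet B → ∀ A₀ : Set 𝕏, MeasurableSet A₀ →
      P {ω | X 0 ω ∈ A₀ ∧ X 1 ω ∈ B} = ∫⁻ t in A₀, (c₁ * ν B + d₁ * R t B) ∂ν := by
    intro B hB A₀ hA₀
    have hA : MeasurableSet ((fun x : Fin 1 → 𝕏 => x 0) ⁻¹' A₀) := measurable_pi_apply 0 hA₀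
    have h := hpred 1 le_rfl B hB _ hA
    have hF : Measurable fun x : Fin 1 → 𝕏 => c₁ * ν B + d₁ * R (x 0) B :=
      measurable_const.add (((Kernel.measurable_coe R hB).comp (measurable_pi_apply 0)).const_mul d₁)
    rw [show {ω | (fun i : Fin 1 => X i ω) ∈ ((fun x : Fin 1 → 𝕏 => x 0) ⁻¹' A₀) ∧ X 1 ω ∈ B}
        = {ω | X 0 ω ∈ A₀ ∧ X 1 ω ∈ B} from rfl] at h
    simp only [Nat.cast_one, div_one, Fin.sum_univ_one] at h
    rw [h, setLIntegral_map hA hF hι1, transfer0 (fun t => c₁ * ν B + d₁ * R t B) (measurable_const.add ((Kernel.measurable_coe R hB).const_mul d₁)) A₀ hA₀]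
    rfl
  -- stationarity
  have hm : ∀ B : Set 𝕏, MeasurableSet B → ∫⁻ t, R t B ∂ν = ν B := by
    intro B hB
    have h := pred1 B hB Set.univ MeasurableSet.univ
    rw [show {ω | X 0 ω ∈ Set.univ ∧ X 1 ω ∈ B} = X 1 ⁻¹' B by ext ω; simp [Set.mem_preimage]] at h
    rw [show P (X 1 ⁻¹' B) = ν B by rw [← hmarg 1, Measure.map_apply (hXm 1) hB]] at h
    rw [Measure.restrict_univ, lintegral_add_left measurable_const,
      lintegral_const, lintegral_const_mul d₁ (Kernel.measurable_coe R hB),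
      measure_univ, mul_one] at h
    have hone : c₁ + d₁ = 1 := by
      rw [hc₁, hd₁, ← ENNReal.ofReal_add (by linarith [hα.2]) (le_of_lt hα.1)]
      norm_num
    have h2 : c₁ * ν B + d₁ * ν B = c₁ * ν B + d₁ * ∫⁻ t, R t B ∂ν := by
      rw [← add_mul, hone, one_mul]; exact h
    have h3 := (ENNReal.add_right_inj (ENNReal.mul_ne_top ENNReal.ofReal_ne_top (measure_ne_top ν B))).mp h2
    exact ((ENNReal.mul_right_inj (by simpa [hd₁] using ENNReal.ofReal_pos.mpr hα.1 |>.ne') ENNReal.ofReal_ne_top).mp h3).symm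
  -- the law of X₁ on X₀-slices
  have hbind : ∀ A₀ : Set 𝕏, MeasurableSet A₀ →
      (P.restrict (X 0 ⁻¹' A₀)).map (X 1)
        = (c₁ * ν A₀) • ν + d₁ • ((ν.restrict A₀).bind R) := by
    intro A₀ hA₀
    ext B hB
    rw [Measure.map_apply (hXm 1) hB, Measure.restrict_apply ((hXm 1) hB),
      show X 1 ⁻¹' B ∩ X 0 ⁻¹' A₀ = {ω | X 0 ω ∈ A₀ ∧ X 1 ω ∈ B} by ext ω; simp [and_comm],
      pred1 B hB A₀ hA₀]
    rw [lintegral_add_left measurable_const, setLIntegral_const,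
      lintegral_const_mul d₁ (Kernel.measurable_coe R hB)]
    rw [Measure.add_apply, Measure.smul_apply, Measure.smul_apply, smul_eq_mul, smul_eq_mul,
      Measure.bind_apply hB (Kernel.measurable R).aemeasurable]
    ring
  -- the key cross term
  have hT : ∀ A₀ : Set 𝕏, MeasurableSet A₀ → ∀ B : Set 𝕏, MeasurableSet B →
      ∫⁻ ω in X 0 ⁻¹' A₀, R (X 1 ω) B ∂P
        = c₁ * ν A₀ * ν B + d₁ * ∫⁻ t in A₀, (∫⁻ y, R y B ∂(R t)) ∂ν := by
    intro A₀ hA₀ B hB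
    have h := lintegral_map (Kernel.measurable_coe R hB) (hXm 1)
      (μ := P.restrict (X 0 ⁻¹' A₀))
    rw [← h, hbind A₀ hA₀, lintegral_add_measure, lintegral_smul_measure,
      lintegral_smul_measure,
      Measure.lintegral_bind (Kernel.measurable R).aemeasurable (Kernel.measurable_coe R hB).aemeasurable,
      hm B hB, smul_eq_mul, smul_eq_mul]
  -- exchangeability: swap X₁ and X₂
  have hswap : ∀ A₀ : Set 𝕏, MeasurableSet A₀ → ∀ B : Set 𝕏, MeasurableSet B →
      P {ω | X 0 ω ∈ A₀ ∧ X 2 ω ∈ B} = P {ω | X 0 ω ∈ A₀ ∧ X 1 ω ∈ B} := by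
    intro A₀ hA₀ B hB
    have hσ : P.map (fun ω (i : Fin 3) => X ((Equiv.swap (1 : Fin 3) 2) i) ω)
        = P.map (fun ω (i : Fin 3) => X i ω) := hexch 3 (Equiv.swap 1 2)
    have hι3 : Measurable fun ω (i : Fin 3) => X i ω := measurable_pi_lambda _ fun i => hXm i
    have hι3σ : Measurable fun ω (i : Fin 3) => X ((Equiv.swap (1 : Fin 3) 2) i) ω :=
      measurable_pi_lambda _ fun i => hXm _
    have hS : MeasurableSet {f : Fin 3 → 𝕏 | f 0 ∈ A₀ ∧ f 2 ∈ B} :=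
      (measurable_pi_apply 0 hA₀).inter (measurable_pi_apply 2 hB)
    have h1 := congrArg (fun μ : Measure (Fin 3 → 𝕏) => μ {f | f 0 ∈ A₀ ∧ f 2 ∈ B}) hσ
    rw [Measure.map_apply hι3σ hS, Measure.map_apply hι3 hS] at h1
    have e1 : (fun ω (i : Fin 3) => X ((Equiv.swap (1 : Fin 3) 2) i) ω) ⁻¹'
        {f : Fin 3 → 𝕏 | f 0 ∈ A₀ ∧ f 2 ∈ B} = {ω | X 0 ω ∈ A₀ ∧ X 1 ω ∈ B} := by
      ext ω
      simp only [Set.mem_preimage, Set.mem_setOf_eq]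
      rw [show ((Equiv.swap (1 : Fin 3) 2) 0 : ℕ) = 0 by decide,
        show ((Equiv.swap (1 : Fin 3) 2) 2 : ℕ) = 1 by decide]
    have e2 : (fun ω (i : Fin 3) => X i ω) ⁻¹'
        {f : Fin 3 → 𝕏 | f 0 ∈ A₀ ∧ f 2 ∈ B} = {ω | X 0 ω ∈ A₀ ∧ X 2 ω ∈ B} := rfl
    rw [e1, e2] at h1
    exact h1.symm
  -- the second predictive equation
  have pred2 : ∀ B : Set 𝕏, MeasurableSet B → ∀ A₀ : Set 𝕏, MeasurableSet A₀ →
      P {ω | X 0 ω ∈ A₀ ∧ X 2 ω ∈ B}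
        = c₂ * ν B * ν A₀ + d₂ * ∫⁻ t in A₀, R t B ∂ν
          + d₂ * ∫⁻ ω in X 0 ⁻¹' A₀, R (X 1 ω) B ∂P := by
    intro B hB A₀ hA₀
    have hA : MeasurableSet ((fun x : Fin 2 → 𝕏 => x 0) ⁻¹' A₀) := measurable_pi_apply 0 hA₀
    have h := hpred 2 (by norm_num) B hB _ hA
    have hF : Measurable fun x : Fin 2 → 𝕏 => c₂ * ν B + d₂ * (R (x 0) B + R (x 1) B) :=
      measurable_const.add
        ((((Kernel.measurable_coe R hB).comp (measurable_pi_apply 0)).add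
          ((Kernel.measurable_coe R hB).comp (measurable_pi_apply 1))).const_mul d₂)
    rw [show {ω | (fun i : Fin 2 => X i ω) ∈ ((fun x : Fin 2 → 𝕏 => x 0) ⁻¹' A₀) ∧ X 2 ω ∈ B}
        = {ω | X 0 ω ∈ A₀ ∧ X 2 ω ∈ B} from rfl] at h
    simp only [Fin.sum_univ_two, Nat.cast_ofNat] at h
    rw [h, setLIntegral_map hA hF hι2]
    have hg0 : Measurable fun ω => R (X 0 ω) B := (Kernel.measurable_coe R hB).comp (hXm 0)
    have hg1 : Measurable fun ω => R (X 1 ω) B := (Kernel.measurable_coe R hB).comp (hXm 1)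
    have hsplit : ∫⁻ ω in X 0 ⁻¹' A₀,
        (c₂ * ν B + d₂ * (R (X 0 ω) B + R (X 1 ω) B)) ∂P
        = c₂ * ν B * P (X 0 ⁻¹' A₀)
          + d₂ * (∫⁻ ω in X 0 ⁻¹' A₀, R (X 0 ω) B ∂P + ∫⁻ ω in X 0 ⁻¹' A₀, R (X 1 ω) B ∂P) := by
      rw [lintegral_add_left measurable_const, setLIntegral_const,
        lintegral_const_mul d₂ (f := fun ω => R (X 0 ω) B + R (X 1 ω) B) (hg0.add hg1), lintegral_add_left hg0]
    show (∫⁻ ω in X 0 ⁻¹' A₀, (c₂ * ν B + d₂ * (R (X 0 ω) B + R (X 1 ω) B)) ∂P) = _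
    rw [hsplit, show P (X 0 ⁻¹' A₀) = ν A₀ by rw [← hmarg 0, Measure.map_apply (hXm 0) hA₀],
      ← transfer0 _ (Kernel.measurable_coe R hB) A₀ hA₀]
    ring
  -- the functional equation, almost everywhere
  have hkeyB : ∀ B : Set 𝕏, MeasurableSet B → ∀ᵐ t ∂ν,
      c₁ * ν B + d₁ * R t B
        = (c₂ * ν B + d₂ * (c₁ * ν B)) + (d₂ * R t B + d₂ * (d₁ * ∫⁻ y, R y B ∂(R t))) := by
    intro B hB
    have hfmeas : Measurable fun t => R t B := Kernel.measurable_coe R hB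
    have hgmeas : Measurable fun t => ∫⁻ y, R y B ∂(R t) :=
      (Measure.measurable_lintegral (Kernel.measurable_coe R hB)).comp (Kernel.measurable R)
    refine ae_eq_of_forall_setLIntegral_eq_of_sigmaFinite
      (measurable_const.add (hfmeas.const_mul d₁))
      (measurable_const.add ((hfmeas.const_mul d₂).add ((hgmeas.const_mul d₁).const_mul d₂)))
      ?_
    intro A₀ hA₀ _
    rw [← pred1 B hB A₀ hA₀, ← hswap A₀ hA₀ B hB, pred2 B hB A₀ hA₀, hT A₀ hA₀ B hB]
    rw [lintegral_add_left measurable_const, setLIntegral_const,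
      lintegral_add_left (hfmeas.const_mul d₂),
      lintegral_const_mul d₂ hfmeas,
      lintegral_const_mul d₂ (hgmeas.const_mul d₁),
      lintegral_const_mul d₁ hgmeas]
    ring
  -- Fix B and show R · B = ν B a.e.
  haveI : (ae ν).NeBot := ae_neBot.2 (IsProbabilityMeasure.ne_zero ν)
  have hfix : ∀ B : Set 𝕏, MeasurableSet B → ∀ᵐ t ∂ν, R t B = ν B := by
    intro B hB
    set p := ν B with hp
    set M := essSup (fun t => R t B) ν with hMdef
    set m := essInf (fun t => R t B) ν with hmdef
    have hfM : ∀ᵐ t ∂ν, R t B ≤ M := ENNReal.ae_le_essSup _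
    have hmf : ∀ᵐ t ∂ν, m ≤ R t B := ae_essInf_le
    have hgM : ∀ᵐ t ∂ν, ∫⁻ y, R y B ∂(R t) ≤ M := by
      filter_upwards [hac] with t ht
      calc ∫⁻ y, R y B ∂(R t) ≤ ∫⁻ _, M ∂(R t) := lintegral_mono_ae (ht.ae_le hfM)
      _ = M := by simp
    have hgm : ∀ᵐ t ∂ν, m ≤ ∫⁻ y, R y B ∂(R t) := by
      filter_upwards [hac] with t ht
      calc m = ∫⁻ _, m ∂(R t) := by simp
      _ ≤ _ := lintegral_mono_ae (ht.ae_le hmf)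
    have hM1 : M ≤ 1 := essSup_le_of_ae_le 1 (ae_of_all _ fun t => prob_le_one)
    have hm1 : m ≤ 1 := by
      obtain ⟨t, h1, h2⟩ := (hmf.and (ae_of_all _ fun t => (prob_le_one : R t B ≤ 1))).exists
      exact h1.trans h2
    have finM : M ≠ ∞ := ne_top_of_le_ne_top one_ne_top hM1
    have finm : m ≠ ∞ := ne_top_of_le_ne_top one_ne_top hm1
    have find₁ : d₁ ≠ ∞ := by rw [hd₁]; exact ENNReal.ofReal_ne_top
    have hd₂' : d₂ = ENNReal.ofReal (a 2 / 2) := by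
      rw [hd₂, ENNReal.ofReal_div_of_pos two_pos, ENNReal.ofReal_ofNat]
    have find₂ : d₂ ≠ ∞ := by rw [hd₂']; finiteness
    have hub : c₁ * p + d₁ * M ≤ ((c₂ * p + d₂ * (c₁ * p)) + d₂ * (d₁ * M)) + d₂ * M := by
      have h1 : essSup (fun t => c₁ * p + d₁ * R t B) ν
          ≤ essSup (fun t => ((c₂ * p + d₂ * (c₁ * p)) + d₂ * (d₁ * M)) + d₂ * R t B) ν := by
        refine essSup_mono_ae ?_
        filter_upwards [hkeyB B hB, hgM] with t ht hgt
        rw [ht]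
        calc (c₂ * p + d₂ * (c₁ * p)) + (d₂ * R t B + d₂ * (d₁ * ∫⁻ y, R y B ∂(R t)))
            = ((c₂ * p + d₂ * (c₁ * p)) + d₂ * (d₁ * ∫⁻ y, R y B ∂(R t))) + d₂ * R t B := by ring
        _ ≤ _ := by gcongr
      rwa [aux_essSup_affine ν _ _ _ find₁, aux_essSup_affine ν _ _ _ find₂] at h1
    have hlb : ((c₂ * p + d₂ * (c₁ * p)) + d₂ * (d₁ * m)) + d₂ * m ≤ c₁ * p + d₁ * m := by
      have h1 : essInf (fun t => ((c₂ * p + d₂ * (c₁ * p)) + d₂ * (d₁ * m)) + d₂ * R t B) ν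
          ≤ essInf (fun t => c₁ * p + d₁ * R t B) ν := by
        refine essInf_mono_ae ?_
        filter_upwards [hkeyB B hB, hgm] with t ht hgt
        rw [ht]
        calc ((c₂ * p + d₂ * (c₁ * p)) + d₂ * (d₁ * m)) + d₂ * R t B
            ≤ ((c₂ * p + d₂ * (c₁ * p)) + d₂ * (d₁ * ∫⁻ y, R y B ∂(R t))) + d₂ * R t B := by gcongr
        _ = _ := by ring
      rwa [aux_essInf_affine ν _ _ _ find₂, aux_essInf_affine ν _ _ _ find₁] at h1
    -- pass to the real numbers
    have h1α : (0:ℝ) ≤ 1 - a 1 := by linarith [hα.2]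
    have h1β : (0:ℝ) ≤ 1 - a 2 := by linarith [hβ.2]
    have hubr := ENNReal.toReal_mono (by finiteness) hub
    have hlbr := ENNReal.toReal_mono (by finiteness) hlb
    rw [hc₁, hd₁, hc₂, hd₂'] at hubr hlbr
    simp (disch := finiteness) only [ENNReal.toReal_add, ENNReal.toReal_mul,
      ENNReal.toReal_div, ENNReal.toReal_ofNat, ENNReal.toReal_ofReal h1α,
      ENNReal.toReal_ofReal h1β, ENNReal.toReal_ofReal hα.1.le,
      ENNReal.toReal_ofReal hβ.1.le,
      ENNReal.toReal_ofReal (by linarith [hβ.1] : (0:ℝ) ≤ a 2 / 2)] at hubr hlbr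
    have hnum : a 2 - 2 * a 1 + a 1 * a 2 < 0 := by
      rcases div_neg_iff.mp hc with ⟨h1, h2⟩ | ⟨h1, h2⟩
      · nlinarith [mul_pos hα.1 hβ.1]
      · exact h1
    have hcpos : 0 < 2 * a 1 - a 2 - a 1 * a 2 := by linarith
    have hMp : M ≤ p := by
      rw [← ENNReal.toReal_le_toReal finM (measure_ne_top ν B)]
      have h2 : (2 * a 1 - a 2 - a 1 * a 2) * (M.toReal - p.toReal) ≤ 0 := by nlinarith [hubr]
      nlinarith [h2, hcpos]
    have hpm : p ≤ m := by
      rw [← ENNReal.toReal_le_toReal (measure_ne_top ν B) finm]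
      have h2 : (2 * a 1 - a 2 - a 1 * a 2) * (p.toReal - m.toReal) ≤ 0 := by nlinarith [hlbr]
      nlinarith [h2, hcpos]
    filter_upwards [hfM, hmf] with t h1 h2
    exact le_antisymm (h1.trans hMp) (hpm.trans h2)
  exact hfix


end AuxProofs

/-- under Hypothesis (H), if `R_x ≪ ν` for ν-a.e. `x` and `c* < 0`,
then `R_x = ν` for ν-a.e. `x`. -/
theorem trivial_reinforcement_of_neg_cstar {Ω 𝕏 : Type*} [MeasurableSpace Ω] [MeasurableSpace 𝕏]
    [StandardBorelSpace 𝕏]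
    (P : Measure Ω) (X : ℕ → Ω → 𝕏) (ν : Measure 𝕏) (R : Kernel 𝕏 𝕏) (a : ℕ → ℝ)
    (hH : HypH P X ν R a)
    (hac : ∀ᵐ x ∂ν, (R x : Measure 𝕏) ≪ ν)
    (hc : (a 2 - 2 * a 1 + a 1 * a 2) / (a 1 * a 2) < 0) :
    ∀ᵐ x ∂ν, (R x : Measure 𝕏) = ν := by
  haveI := hH.probP
  haveI := hH.probν
  haveI := hH.markov
  haveI : MeasurableSpace.CountablyGenerated 𝕏 := by
    letI := upgradeStandardBorel 𝕏; infer_instance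
  exact aux_ae_eq_of_forall ν R
    (aux_main P X ν R a hH.meas hH.marginal (hH.a_mem 1 le_rfl) (hH.a_mem 2 (by norm_num))
      hH.pred hH.exch hac hc)
end
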